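/- For every real λ, the eigenvalues of the normalized Berezin transform converge to 1: lim_{ν→∞, ν ∈ ℕ, ν ≥ 2} b_ν(λ) = 1. -/

import Mathlib

open Complex Filter Topology

/-- The eigenvalue `b_ν(λ) = |Γ(ν − 1/2 + iλ)|² / (Γ(ν)·Γ(ν−1))` of the normalized
Berezin transform `(ν−1)B_ν` on the spherical function `e_{λ,b}`. -/
noncomputable def bEig (ν : ℕ) (l : ℝ) : ℝ :=
  ‖Complex.Gamma ((ν : ℂ) - 1/2 + l * Complex.I)‖ ^ 2 /
    (Real.Gamma ν * Real.Gamma ((ν : ℝ) - 1))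

lemma gamma_add_nat_eq (a : ℂ) (h : ∀ j : ℕ, a + j ≠ 0) (n : ℕ) :
    Complex.Gamma (a + n + 1) = Complex.Gamma a * ∏ j ∈ Finset.range (n + 1), (a + j) := by
  induction n with
  | zero =>
    have h0 : a ≠ 0 := by simpa using h 0
    simp [Complex.Gamma_add_one a h0, mul_comm]
  | succ n ih =>
    have key : a + (n + 1 : ℕ) + 1 = (a + n + 1) + 1 := by push_cast; ring
    have hne : a + (n : ℂ) + 1 ≠ 0 := by
      have := h (n + 1); push_cast at this; rwa [← add_assoc] at this
    rw [key, Complex.Gamma_add_one _ hne, ih]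
    conv_rhs => rw [Finset.prod_range_succ]
    have hc : (((n + 1 : ℕ)) : ℂ) = (n : ℂ) + 1 := by push_cast; ring
    rw [hc]
    ring

lemma ratio_tendsto (a : ℂ) (h : ∀ j : ℕ, a + j ≠ 0) :
    Tendsto (fun n : ℕ => Complex.Gamma (a + n + 1) / ((n.factorial : ℂ) * (n : ℂ) ^ a))
      atTop (𝓝 1) := by
  have hg : Complex.Gamma a ≠ 0 := by
    refine Complex.Gamma_ne_zero fun m hm => h m ?_
    rw [hm]; ring
  have h1 : Tendsto (fun n => Complex.Gamma a / Complex.GammaSeq a n) atTop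
      (𝓝 (Complex.Gamma a / Complex.Gamma a)) :=
    tendsto_const_nhds.div (Complex.GammaSeq_tendsto_Gamma a) hg
  rw [div_self hg] at h1
  refine h1.congr' ?_
  filter_upwards [eventually_ge_atTop 1] with n hn
  have hn0 : (n : ℂ) ≠ 0 := Nat.cast_ne_zero.mpr (by omega)
  have hpow : (n : ℂ) ^ a ≠ 0 := by simp [Complex.cpow_eq_zero_iff, hn0]
  have hfac : ((n.factorial : ℕ) : ℂ) ≠ 0 := Nat.cast_ne_zero.mpr n.factorial_ne_zero
  have hprod : (∏ j ∈ Finset.range (n + 1), (a + (j : ℂ))) ≠ 0 :=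
    Finset.prod_ne_zero_iff.mpr fun j _ => h j
  rw [Complex.GammaSeq, gamma_add_nat_eq a h n]
  field_simp

lemma pow_factor_tendsto (a : ℂ) :
    Tendsto (fun n : ℕ => ((n : ℂ) + 1) ^ a * ((n : ℂ) + 2) ^ (-a)) atTop (𝓝 1) := by
  have key : ∀ n : ℕ, ((n : ℂ) + 1) ^ a * ((n : ℂ) + 2) ^ (-a)
      = Complex.exp ((((Real.log ((n : ℝ) + 1) - Real.log ((n : ℝ) + 2)) : ℝ) : ℂ) * a) := by
    intro n
    have h1 : ((n : ℂ) + 1) ≠ 0 := by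
      have : ((n + 1 : ℕ) : ℂ) ≠ 0 := Nat.cast_ne_zero.mpr n.succ_ne_zero
      push_cast at this; exact this
    have h2 : ((n : ℂ) + 2) ≠ 0 := by
      have : ((n + 2 : ℕ) : ℂ) ≠ 0 := Nat.cast_ne_zero.mpr (by omega)
      push_cast at this; exact this
    rw [Complex.cpow_def_of_ne_zero h1, Complex.cpow_def_of_ne_zero h2, ← Complex.exp_add]
    have e1 : ((n : ℂ) + 1) = (((n : ℝ) + 1 : ℝ) : ℂ) := by push_cast; ring
    have e2 : ((n : ℂ) + 2) = (((n : ℝ) + 2 : ℝ) : ℂ) := by push_cast; ring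
    rw [e1, e2, ← Complex.ofReal_log (by positivity), ← Complex.ofReal_log (by positivity)]
    congr 1
    push_cast
    ring
  have hr : Tendsto (fun n : ℕ => Real.log ((n : ℝ) + 1) - Real.log ((n : ℝ) + 2))
      atTop (𝓝 0) := by
    have hq : Tendsto (fun n : ℕ => ((n : ℝ) + 1) / ((n : ℝ) + 2)) atTop (𝓝 1) := by
      have h0 : Tendsto (fun n : ℕ => ((n : ℝ) + 2)⁻¹) atTop (𝓝 0) :=
        (tendsto_atTop_add_const_right atTop (2 : ℝ)
          (tendsto_natCast_atTop_atTop)).inv_tendsto_atTop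
      have h3 : Tendsto (fun n : ℕ => 1 - ((n : ℝ) + 2)⁻¹) atTop (𝓝 (1 - 0)) :=
        tendsto_const_nhds.sub h0
      rw [sub_zero] at h3
      refine h3.congr fun n => ?_
      have hne : ((n : ℝ) + 2) ≠ 0 := by positivity
      field_simp
      ring
    have hlog : Tendsto (fun n : ℕ => Real.log (((n : ℝ) + 1) / ((n : ℝ) + 2))) atTop
        (𝓝 (Real.log 1)) := ((Real.continuousAt_log one_ne_zero).tendsto).comp hq
    rw [Real.log_one] at hlog
    refine hlog.congr fun n => ?_
    rw [Real.log_div (by positivity) (by positivity)]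
  have hc : Tendsto (fun n : ℕ =>
      (((Real.log ((n : ℝ) + 1) - Real.log ((n : ℝ) + 2)) : ℝ) : ℂ) * a) atTop (𝓝 0) := by
    have := ((Complex.continuous_ofReal.tendsto 0).comp hr).mul_const a
    simpa using this
  have := (Complex.continuous_exp.tendsto 0).comp hc
  rw [Complex.exp_zero] at this
  exact this.congr fun n => (key n).symm

/-- For every real `λ`, the eigenvalues of the normalized Berezin transform converge
to `1`: `b_ν(λ) → 1` as `ν → ∞`. -/
theorem bEig_tendsto_one (l : ℝ) :
    Tendsto (fun ν : ℕ => bEig ν l) atTop (nhds 1) := by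
  rw [← tendsto_add_atTop_iff_nat 3]
  set a : ℂ := 1/2 + l * Complex.I with ha_def
  have ha : ∀ j : ℕ, a + j ≠ 0 := by
    intro j hj
    have h2 := congrArg Complex.re hj
    simp [ha_def] at h2
    have hj' : (0 : ℝ) ≤ (j : ℝ) := Nat.cast_nonneg j
    nlinarith
  have ha' : ∀ j : ℕ, -a + j ≠ 0 := by
    intro j hj
    have h2 := congrArg Complex.re hj
    simp [ha_def] at h2
    have hj0 : (0 : ℝ) ≤ (j : ℝ) := Nat.cast_nonneg j
    rcases Nat.eq_zero_or_pos j with h | h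
    · subst h; norm_num at h2
    · have h1 : (1 : ℝ) ≤ (j : ℝ) := by exact_mod_cast h
      nlinarith
  have t1 : Tendsto (fun n : ℕ =>
      Complex.Gamma (a + ((n : ℂ) + 1) + 1) /
        (((n + 1).factorial : ℂ) * ((n : ℂ) + 1) ^ a)) atTop (𝓝 1) := by
    have h := (ratio_tendsto a ha).comp (tendsto_add_atTop_nat 1)
    refine h.congr fun n => ?_
    simp only [Function.comp_apply]
    push_cast
    ring_nf
  have t2 : Tendsto (fun n : ℕ =>
      Complex.Gamma (-a + ((n : ℂ) + 2) + 1) /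
        (((n + 2).factorial : ℂ) * ((n : ℂ) + 2) ^ (-a))) atTop (𝓝 1) := by
    have h := (ratio_tendsto (-a) ha').comp (tendsto_add_atTop_nat 2)
    refine h.congr fun n => ?_
    simp only [Function.comp_apply]
    push_cast
    ring_nf
  have t3 := pow_factor_tendsto a
  have T : Tendsto (fun n : ℕ =>
      (Complex.Gamma (a + ((n : ℂ) + 1) + 1) /
        (((n + 1).factorial : ℂ) * ((n : ℂ) + 1) ^ a)) *
      (Complex.Gamma (-a + ((n : ℂ) + 2) + 1) /
        (((n + 2).factorial : ℂ) * ((n : ℂ) + 2) ^ (-a))) *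
      (((n : ℂ) + 1) ^ a * ((n : ℂ) + 2) ^ (-a))) atTop (𝓝 1) := by
    have h := (t1.mul t2).mul t3
    simpa using h
  have key : ∀ n : ℕ, ((bEig (n + 3) l : ℝ) : ℂ) =
      (Complex.Gamma (a + ((n : ℂ) + 1) + 1) /
        (((n + 1).factorial : ℂ) * ((n : ℂ) + 1) ^ a)) *
      (Complex.Gamma (-a + ((n : ℂ) + 2) + 1) /
        (((n + 2).factorial : ℂ) * ((n : ℂ) + 2) ^ (-a))) *
      (((n : ℂ) + 1) ^ a * ((n : ℂ) + 2) ^ (-a)) := by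
    intro n
    have hb1 : ((n : ℂ) + 1) ≠ 0 := by
      have : ((n + 1 : ℕ) : ℂ) ≠ 0 := Nat.cast_ne_zero.mpr n.succ_ne_zero
      push_cast at this; exact this
    have hb2 : ((n : ℂ) + 2) ≠ 0 := by
      have : ((n + 2 : ℕ) : ℂ) ≠ 0 := Nat.cast_ne_zero.mpr (by omega)
      push_cast at this; exact this
    have hp1 : ((n : ℂ) + 1) ^ a ≠ 0 := by simp [Complex.cpow_eq_zero_iff, hb1]
    have hp2 : ((n : ℂ) + 2) ^ (-a) ≠ 0 := by simp [Complex.cpow_eq_zero_iff, hb2]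
    have hf1 : (((n + 1).factorial : ℕ) : ℂ) ≠ 0 :=
      Nat.cast_ne_zero.mpr (Nat.factorial_ne_zero _)
    have hf2 : (((n + 2).factorial : ℕ) : ℂ) ≠ 0 :=
      Nat.cast_ne_zero.mpr (Nat.factorial_ne_zero _)
    set w : ℂ := ((n + 3 : ℕ) : ℂ) - 1/2 + l * Complex.I with hw
    have e1 : a + ((n : ℂ) + 1) + 1 = w := by rw [hw, ha_def]; push_cast; ring
    have e2 : -a + ((n : ℂ) + 2) + 1 = (starRingEnd ℂ) w := by
      rw [hw, ha_def]
      simp only [map_add, map_sub, map_mul, Complex.conj_I, Complex.conj_natCast,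
        Complex.conj_ofReal, map_one, map_ofNat, map_div₀]
      push_cast; ring
    have habs : ((‖Complex.Gamma w‖ ^ 2 : ℝ) : ℂ)
        = Complex.Gamma w * Complex.Gamma ((starRingEnd ℂ) w) := by
      rw [Complex.Gamma_conj, Complex.sq_norm, Complex.mul_conj]
    have hg1 : Real.Gamma ((n + 3 : ℕ) : ℝ) = ((n + 2).factorial : ℝ) := by
      have hc : ((n + 3 : ℕ) : ℝ) = ((n + 2 : ℕ) : ℝ) + 1 := by push_cast; ring
      rw [hc, Real.Gamma_nat_eq_factorial]
    have hg2 : Real.Gamma (((n + 3 : ℕ) : ℝ) - 1) = ((n + 1).factorial : ℝ) := by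
      have hc : ((n + 3 : ℕ) : ℝ) - 1 = ((n + 1 : ℕ) : ℝ) + 1 := by push_cast; ring
      rw [hc, Real.Gamma_nat_eq_factorial]
    rw [bEig, hg1, hg2, e1, e2, Complex.ofReal_div, Complex.ofReal_mul, habs]
    push_cast
    field_simp
  have T2 : Tendsto (fun n : ℕ => ((bEig (n + 3) l : ℝ) : ℂ)) atTop (𝓝 1) :=
    T.congr fun n => (key n).symm
  have h := (Complex.continuous_re.tendsto 1).comp T2
  simpa [Function.comp_def] using h
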